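/- Let f : ℝ^d → ℝ be differentiable, L-smooth and μ-strongly convex with 0 < μ < L, and x_⋆ its minimizer. For exact line search steepest descent x_{k+1} = x_k − α_k∇f(x_k) with α_k = argmin_α f(x_k − α∇f(x_k)), one has f(x_{k+1}) − f(x_⋆) ≤ ((κ−1)/(κ+1))²·(f(x_k) − f(x_⋆)) where κ = L/μ. -/

import Mathlib

open Set InnerProductSpace RealInnerProductSpace

variable {F : Type*} [NormedAddCommGroup F] [InnerProductSpace ℝ F] [CompleteSpace F]

private lemma lineDeriv_aux (f : F → ℝ) (hf : Differentiable ℝ f) (a v : F) (t : ℝ) :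
    HasDerivAt (fun s : ℝ => f (a + s • v)) ⟪gradient f (a + t • v), v⟫_ℝ t := by
  have hc : HasDerivAt (fun s : ℝ => a + s • v) v t := by
    simpa using ((hasDerivAt_id t).smul_const v).const_add a
  have hfd : HasFDerivAt f (toDual ℝ F (gradient f (a + t • v))) (a + t • v) :=
    hasGradientAt_iff_hasFDerivAt.mp (hf _).hasGradientAt
  have h := hfd.comp_hasDerivAt t hc
  rw [toDual_apply_apply] at h
  exact h

private lemma descent_aux {f : F → ℝ} (hf : Differentiable ℝ f) {C : ℝ} (hC : 0 ≤ C)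
    (hlip : ∀ x y, ‖gradient f x - gradient f y‖ ≤ C * ‖x - y‖) (a b : F) :
    f b ≤ f a + ⟪gradient f a, b - a⟫_ℝ + C / 2 * ‖b - a‖ ^ 2 := by
  set v := b - a with hv
  set ψ : ℝ → ℝ := fun s : ℝ =>
    f (a + s • v) - s * ⟪gradient f a, v⟫_ℝ - C * s ^ 2 / 2 * ‖v‖ ^ 2 with hψdef
  have hψ : ∀ t : ℝ, HasDerivAt ψ
      (⟪gradient f (a + t • v), v⟫_ℝ - ⟪gradient f a, v⟫_ℝ - C * t * ‖v‖ ^ 2) t := by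
    intro t
    have h1 := lineDeriv_aux f hf a v t
    have h2 : HasDerivAt (fun s : ℝ => s * ⟪gradient f a, v⟫_ℝ) ⟪gradient f a, v⟫_ℝ t := by
      simpa using (hasDerivAt_id t).mul_const ⟪gradient f a, v⟫_ℝ
    have h3 : HasDerivAt (fun s : ℝ => C * s ^ 2 / 2 * ‖v‖ ^ 2) (C * t * ‖v‖ ^ 2) t := by
      have h4 := (((hasDerivAt_pow 2 t).const_mul C).div_const 2).mul_const (‖v‖ ^ 2)
      refine h4.congr_deriv ?_
      push_cast
      ring
    exact (h1.sub h2).sub h3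
  have hanti : AntitoneOn ψ (Icc (0:ℝ) 1) := by
    refine antitoneOn_of_deriv_nonpos (convex_Icc 0 1)
      (fun t _ => (hψ t).continuousAt.continuousWithinAt)
      (fun t _ => ((hψ t).differentiableAt).differentiableWithinAt) (fun t ht => ?_)
    rw [interior_Icc] at ht
    rw [(hψ t).deriv]
    have e1 : ⟪gradient f (a + t • v), v⟫_ℝ - ⟪gradient f a, v⟫_ℝ
        = ⟪gradient f (a + t • v) - gradient f a, v⟫_ℝ := (inner_sub_left _ _ _).symm
    have e2 := real_inner_le_norm (gradient f (a + t • v) - gradient f a) v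
    have e3 := hlip (a + t • v) a
    have e4 : ‖a + t • v - a‖ = t * ‖v‖ := by
      rw [add_sub_cancel_left, norm_smul, Real.norm_eq_abs, abs_of_pos ht.1]
    rw [e4] at e3
    have e5 : ‖gradient f (a + t • v) - gradient f a‖ * ‖v‖ ≤ C * (t * ‖v‖) * ‖v‖ :=
      mul_le_mul_of_nonneg_right e3 (norm_nonneg v)
    rw [e1]
    nlinarith [norm_nonneg v, e2]
  have h01 := hanti (left_mem_Icc.mpr zero_le_one) (right_mem_Icc.mpr zero_le_one) zero_le_one
  have hz : ψ 0 = f a := by simp [hψdef]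
  have ho : ψ 1 = f b - ⟪gradient f a, v⟫_ℝ - C / 2 * ‖v‖ ^ 2 := by
    have h6 : a + v = b := by rw [hv]; abel
    simp only [hψdef, one_smul, one_pow, mul_one, h6, one_mul]
  rw [hz, ho] at h01
  linarith

private lemma tangent_aux {h : F → ℝ} (hd : Differentiable ℝ h)
    (hc : ConvexOn ℝ univ h) (a b : F) :
    h a + ⟪gradient h a, b - a⟫_ℝ ≤ h b := by
  have hφc : ConvexOn ℝ univ (fun t : ℝ => h (a + t • (b - a))) := by
    have h2 := hc.comp_affineMap (AffineMap.lineMap a b : ℝ →ᵃ[ℝ] F)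
    have h3 : (fun t : ℝ => h (a + t • (b - a)))
        = h ∘ (AffineMap.lineMap a b : ℝ →ᵃ[ℝ] F) := by
      funext t
      simp only [Function.comp_apply, AffineMap.lineMap_apply_module]
      congr 1
      module
    rw [h3]
    simpa using h2
  have hder := lineDeriv_aux h hd a (b - a) 0
  have h0 : a + (0:ℝ) • (b - a) = a := by simp
  rw [h0] at hder
  have hsl := hφc.le_slope_of_hasDerivAt (x := 0) (y := 1) (mem_univ _) (mem_univ _)
    one_pos hder
  rw [slope_def_field] at hsl
  have h1 : a + (1:ℝ) • (b - a) = b := by simp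
  rw [h1, h0] at hsl
  simp only [sub_zero, div_one] at hsl
  linarith

private lemma coco_aux {h : F → ℝ} {C : ℝ} (hC : 0 < C)
    (hdesc : ∀ x y, h y ≤ h x + ⟪gradient h x, y - x⟫_ℝ + C / 2 * ‖y - x‖ ^ 2)
    (htan : ∀ x y, h x + ⟪gradient h x, y - x⟫_ℝ ≤ h y) (a b : F) :
    h b + ⟪gradient h b, a - b⟫_ℝ + 1 / (2 * C) * ‖gradient h a - gradient h b‖ ^ 2 ≤ h a := by
  set c := gradient h b with hc0
  set w := gradient h a - c with hw
  set y := a - (1 / C) • w with hy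
  have h1 := hdesc a y
  have h2 := htan b y
  have e1 : y - a = -((1/C) • w) := by rw [hy]; abel
  have e2 : ⟪gradient h a, y - a⟫_ℝ = -((1/C) * ⟪gradient h a, w⟫_ℝ) := by
    rw [e1, inner_neg_right, real_inner_smul_right]
  have e3 : ‖y - a‖ ^ 2 = (1/C)^2 * ‖w‖^2 := by
    rw [e1, norm_neg, norm_smul, Real.norm_eq_abs, mul_pow, sq_abs]
  have e4 : ⟪c, y - b⟫_ℝ = ⟪c, a - b⟫_ℝ - (1/C) * ⟪c, w⟫_ℝ := by
    have e4' : y - b = (a - b) - (1/C) • w := by rw [hy]; abel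
    rw [e4', inner_sub_right, real_inner_smul_right]
  have e5 : ⟪gradient h a, w⟫_ℝ - ⟪c, w⟫_ℝ = ‖w‖^2 := by
    rw [← inner_sub_left, ← hw, real_inner_self_eq_norm_sq]
  rw [e2, e3] at h1
  rw [e4] at h2
  have hC' : (C:ℝ) ≠ 0 := ne_of_gt hC
  have key : C / 2 * ((1/C)^2 * ‖w‖^2) = 1/(2*C) * ‖w‖^2 := by field_simp
  rw [key] at h1
  have e6 : (1/C) * ⟪gradient h a, w⟫_ℝ - (1/C) * ⟪c, w⟫_ℝ = (1/C) * ‖w‖^2 := by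
    rw [← mul_sub, e5]
  have e7 : (1/C)*‖w‖^2 = 2*(1/(2*C)*‖w‖^2) := by field_simp
  linarith

private lemma grad_shift (f : F → ℝ) (hf : Differentiable ℝ f) (c : ℝ) (z : F) :
    HasGradientAt (fun w => f w - c * ‖w‖ ^ 2) (gradient f z - (2*c) • z) z := by
  rw [hasGradientAt_iff_hasFDerivAt]
  have h1 : HasFDerivAt f (toDual ℝ F (gradient f z)) z :=
    hasGradientAt_iff_hasFDerivAt.mp (hf z).hasGradientAt
  have h2 : HasFDerivAt (fun w : F => ⟪w, w⟫_ℝ)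
      ((fderivInnerCLM ℝ (z, z)).comp ((ContinuousLinearMap.id ℝ F).prod
        (ContinuousLinearMap.id ℝ F))) z :=
    (hasFDerivAt_id z).inner ℝ (hasFDerivAt_id z)
  have heq : (fun w : F => ‖w‖^2) = (fun w : F => ⟪w, w⟫_ℝ) := by
    funext w; rw [real_inner_self_eq_norm_sq]
  have h2' : HasFDerivAt (fun w : F => ‖w‖^2)
      ((fderivInnerCLM ℝ (z, z)).comp ((ContinuousLinearMap.id ℝ F).prod
        (ContinuousLinearMap.id ℝ F))) z := by rw [heq]; exact h2
  have h3 := h1.sub (h2'.const_mul c)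
  refine h3.congr_fderiv ?_
  ext v
  simp only [toDual_apply_apply, ContinuousLinearMap.sub_apply, ContinuousLinearMap.comp_apply,
    ContinuousLinearMap.prod_apply, ContinuousLinearMap.coe_id', id_eq,
    ContinuousLinearMap.smul_apply, fderivInnerCLM_apply, smul_eq_mul,
    inner_sub_left, real_inner_smul_left]
  rw [real_inner_comm v z]
  ring

private lemma expand2_aux (A B : ℝ) (x y : F) :
    ‖A • x - B • y‖^2
      = A^2*‖x‖^2 + B^2*‖y‖^2 - 2*(A*B)*⟪x, y⟫_ℝ := by
  rw [norm_sub_sq_real, norm_smul, norm_smul, real_inner_smul_left, real_inner_smul_right]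
  simp only [Real.norm_eq_abs, mul_pow, sq_abs]
  ring

private lemma expand3_aux (A B C : ℝ) (x y z : F) :
    ‖A • x - B • y - C • z‖^2
      = A^2*‖x‖^2 + B^2*‖y‖^2 + C^2*‖z‖^2
        - 2*(A*B)*⟪x, y⟫_ℝ - 2*(A*C)*⟪x, z⟫_ℝ + 2*(B*C)*⟪y, z⟫_ℝ := by
  rw [norm_sub_sq_real, expand2_aux, norm_smul, inner_sub_left, real_inner_smul_left,
    real_inner_smul_left, real_inner_smul_right, real_inner_smul_right]
  simp only [Real.norm_eq_abs, mul_pow, sq_abs]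
  ring

private lemma master_aux (μ L α E G0 G1 p q f0 f1 fs : ℝ) (hμ : 0 < μ) (hμL : μ < L)
    (hQ1 : f1 + μ/2*(α^2*G0) + 1/(2*(L-μ))*((1-μ*α)^2*G0 + G1) ≤ f0)
    (hQ2 : f0 - p + μ/2*E + 1/(2*(L-μ))*(μ^2*E - 2*μ*p + G0) ≤ fs)
    (hQ3 : f1 - q + μ/2*(E - 2*α*p + α^2*G0)
      + 1/(2*(L-μ))*(μ^2*E + μ^2*α^2*G0 + G1 - 2*μ^2*α*p - 2*μ*q) ≤ fs)
    (hS1 : 0 ≤ (2*L*μ)^2*E + (α*μ*(L+μ)+(L-μ))^2*G0 + (L+μ)^2*G1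
      - 2*((2*L*μ)*(α*μ*(L+μ)+(L-μ)))*p - 2*((2*L*μ)*(L+μ))*q)
    (hS2 : 0 ≤ (2-α*(L+μ))^2 * G0) :
    f1 - fs ≤ ((L-μ)/(L+μ))^2 * (f0-fs) := by
  have hD : (0:ℝ) < L - μ := by linarith
  have hS : (0:ℝ) < L + μ := by linarith
  have hD' : (L - μ) ≠ 0 := ne_of_gt hD
  have hS' : (L + μ) ≠ 0 := ne_of_gt hS
  have key : ((L-μ)/(L+μ))^2*(f0-fs) - (f1-fs) =
      ((L-μ)/(L+μ)) * (f0 - (f1 + μ/2*(α^2*G0) + 1/(2*(L-μ))*((1-μ*α)^2*G0 + G1)))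
    + ((L-μ)/(L+μ)*(2*μ/(L+μ))) * (fs - (f0 - p + μ/2*E + 1/(2*(L-μ))*(μ^2*E - 2*μ*p + G0)))
    + (2*μ/(L+μ)) * (fs - (f1 - q + μ/2*(E - 2*α*p + α^2*G0)
        + 1/(2*(L-μ))*(μ^2*E + μ^2*α^2*G0 + G1 - 2*μ^2*α*p - 2*μ*q)))
    + (1/(2*(L-μ)*(L+μ)^2)) * ((2*L*μ)^2*E + (α*μ*(L+μ)+(L-μ))^2*G0 + (L+μ)^2*G1
        - 2*((2*L*μ)*(α*μ*(L+μ)+(L-μ)))*p - 2*((2*L*μ)*(L+μ))*q)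
    + (μ/(2*(L+μ)^2)) * ((2-α*(L+μ))^2 * G0) := by
    field_simp
    ring
  have t1 : 0 ≤ ((L-μ)/(L+μ)) * (f0 - (f1 + μ/2*(α^2*G0) + 1/(2*(L-μ))*((1-μ*α)^2*G0 + G1))) :=
    mul_nonneg (by positivity) (by linarith)
  have t2 : 0 ≤ ((L-μ)/(L+μ)*(2*μ/(L+μ))) * (fs - (f0 - p + μ/2*E
      + 1/(2*(L-μ))*(μ^2*E - 2*μ*p + G0))) :=
    mul_nonneg (by positivity) (by linarith)
  have t3 : 0 ≤ (2*μ/(L+μ)) * (fs - (f1 - q + μ/2*(E - 2*α*p + α^2*G0)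
      + 1/(2*(L-μ))*(μ^2*E + μ^2*α^2*G0 + G1 - 2*μ^2*α*p - 2*μ*q))) :=
    mul_nonneg (by positivity) (by linarith)
  have t4 : 0 ≤ (1/(2*(L-μ)*(L+μ)^2)) * ((2*L*μ)^2*E + (α*μ*(L+μ)+(L-μ))^2*G0 + (L+μ)^2*G1
      - 2*((2*L*μ)*(α*μ*(L+μ)+(L-μ)))*p - 2*((2*L*μ)*(L+μ))*q) :=
    mul_nonneg (by positivity) hS1
  have t5 : 0 ≤ (μ/(2*(L+μ)^2)) * ((2-α*(L+μ))^2 * G0) :=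
    mul_nonneg (by positivity) hS2
  linarith


private lemma interp_aux {f : F → ℝ} {μ L : ℝ} (hμ : 0 < μ) (hμL : μ < L)
    (hf : Differentiable ℝ f)
    (hsmooth : ∀ x y, ‖gradient f x - gradient f y‖ ≤ L * ‖x - y‖)
    (hsc : ConvexOn ℝ univ (fun x => f x - μ / 2 * ‖x‖ ^ 2)) (a b : F) :
    f b + ⟪gradient f b, a - b⟫_ℝ + μ/2 * ‖a - b‖^2
      + 1/(2*(L-μ)) * ‖gradient f a - gradient f b - μ • (a - b)‖^2 ≤ f a := by
  set h : F → ℝ := fun x => f x - μ / 2 * ‖x‖ ^ 2 with hhdef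
  have hh : Differentiable ℝ h := hf.sub ((differentiable_id.norm_sq ℝ).const_mul (μ/2))
  have hgh : ∀ z, gradient h z = gradient f z - μ • z := by
    intro z
    have hgs := grad_shift f hf (μ/2) z
    rw [show 2*(μ/2) = μ by ring] at hgs
    exact hgs.gradient
  have htan_h : ∀ x y, h x + ⟪gradient h x, y - x⟫_ℝ ≤ h y := fun x y => tangent_aux hh hsc x y
  have hdesc_f := descent_aux hf (le_of_lt (lt_trans hμ hμL)) hsmooth
  have hD : (0:ℝ) < L - μ := by linarith
  have hdesc_h : ∀ x y, h y ≤ h x + ⟪gradient h x, y - x⟫_ℝ + (L-μ)/2 * ‖y - x‖^2 := by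
    intro x y
    have H := hdesc_f x y
    have e1 : ⟪gradient h x, y - x⟫_ℝ = ⟪gradient f x, y - x⟫_ℝ - μ * ⟪x, y - x⟫_ℝ := by
      rw [hgh x, inner_sub_left, real_inner_smul_left]
    have e2 : ⟪x, y - x⟫_ℝ = ⟪x, y⟫_ℝ - ‖x‖^2 := by
      rw [inner_sub_right, real_inner_self_eq_norm_sq]
    have e3 : ‖y - x‖^2 = ‖y‖^2 - 2*⟪y, x⟫_ℝ + ‖x‖^2 := norm_sub_sq_real y x
    have e4 : ⟪y, x⟫_ℝ = ⟪x, y⟫_ℝ := real_inner_comm x y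
    have hyv : h y = f y - μ/2 * ‖y‖^2 := rfl
    have hxv : h x = f x - μ/2 * ‖x‖^2 := rfl
    rw [e3, e4] at H
    rw [hyv, hxv, e1, e2, e3, e4]
    linarith
  have hint := coco_aux hD hdesc_h htan_h a b
  have g1 : gradient h a - gradient h b = gradient f a - gradient f b - μ • (a - b) := by
    rw [hgh a, hgh b, smul_sub]; abel
  have g2 : ⟪gradient h b, a - b⟫_ℝ = ⟪gradient f b, a - b⟫_ℝ - μ * ⟪b, a - b⟫_ℝ := by
    rw [hgh b, inner_sub_left, real_inner_smul_left]
  have g3 : ⟪b, a - b⟫_ℝ = ⟪b, a⟫_ℝ - ‖b‖^2 := by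
    rw [inner_sub_right, real_inner_self_eq_norm_sq]
  have g4 : ‖a - b‖^2 = ‖a‖^2 - 2*⟪a, b⟫_ℝ + ‖b‖^2 := norm_sub_sq_real a b
  have g5 : ⟪b, a⟫_ℝ = ⟪a, b⟫_ℝ := real_inner_comm a b
  have hav : h a = f a - μ/2 * ‖a‖^2 := rfl
  have hbv : h b = f b - μ/2 * ‖b‖^2 := rfl
  rw [g1, g2, g3, g5, hav, hbv] at hint
  rw [g4]
  linarith


theorem stmt_16 (d : ℕ) (μ L : ℝ) (hμ : 0 < μ) (hμL : μ < L)
    (f : EuclideanSpace ℝ (Fin d) → ℝ) (hf : Differentiable ℝ f)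
    (hsmooth : ∀ x y, ‖gradient f x - gradient f y‖ ≤ L * ‖x - y‖)
    (hsc : ConvexOn ℝ Set.univ (fun x => f x - μ / 2 * ‖x‖ ^ 2))
    (xstar : EuclideanSpace ℝ (Fin d)) (hcrit : gradient f xstar = 0)
    (xk : EuclideanSpace ℝ (Fin d)) (αk : ℝ)
    (hmin : ∀ α : ℝ, f (xk - αk • gradient f xk) ≤ f (xk - α • gradient f xk)) :
    f (xk - αk • gradient f xk) - f xstar ≤
      ((L / μ - 1) / (L / μ + 1)) ^ 2 * (f xk - f xstar) := by
  have hL0 : (0:ℝ) < L := lt_trans hμ hμL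
  have hD : (0:ℝ) < L - μ := by linarith
  have hS : (0:ℝ) < L + μ := by linarith
  have hint := interp_aux hμ hμL hf hsmooth hsc
  obtain ⟨g0, hg0⟩ : ∃ w, gradient f xk = w := ⟨_, rfl⟩
  rw [hg0] at hmin ⊢
  obtain ⟨x1, hx1⟩ : ∃ w, xk - αk • g0 = w := ⟨_, rfl⟩
  rw [hx1] at hmin ⊢
  obtain ⟨g1, hg1⟩ : ∃ w, gradient f x1 = w := ⟨_, rfl⟩
  obtain ⟨e, he⟩ : ∃ w, xk - xstar = w := ⟨_, rfl⟩
  have horth : ⟪g1, g0⟫_ℝ = 0 := by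
    have hline := lineDeriv_aux f hf xk (-g0) αk
    have hfun : (fun s : ℝ => f (xk + s • (-g0))) = (fun s : ℝ => f (xk - s • g0)) := by
      funext s; rw [smul_neg, ← sub_eq_add_neg]
    rw [hfun] at hline
    have hlm : IsLocalMin (fun s : ℝ => f (xk - s • g0)) αk := by
      apply Filter.Eventually.of_forall
      intro s
      show f (xk - αk • g0) ≤ f (xk - s • g0)
      rw [hx1]; exact hmin s
    have hz := hlm.hasDerivAt_eq_zero hline
    rw [show xk + αk • (-g0) = x1 by rw [smul_neg, ← sub_eq_add_neg, hx1]] at hz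
    rw [hg1, inner_neg_right] at hz
    linarith
  have horth' : ⟪g0, g1⟫_ℝ = 0 := by rw [real_inner_comm]; exact horth
  -- Q1
  have H1 := hint xk x1
  rw [hg0, hg1, show xk - x1 = αk • g0 by rw [← hx1]; abel] at H1
  have q1a : ⟪g1, αk • g0⟫_ℝ = 0 := by rw [real_inner_smul_right, horth, mul_zero]
  have q1b : ‖αk • g0‖^2 = αk^2 * ‖g0‖^2 := by
    rw [norm_smul]; simp [mul_pow, sq_abs]
  have q1c : ‖g0 - g1 - μ • (αk • g0)‖^2 = (1-μ*αk)^2*‖g0‖^2 + ‖g1‖^2 := by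
    rw [show g0 - g1 - μ • (αk • g0) = (1-μ*αk) • g0 - (1:ℝ) • g1 by module,
      expand2_aux, horth']
    ring
  rw [q1a, q1b, q1c] at H1
  -- Q2
  have H2 := hint xstar xk
  rw [hg0, hcrit, show xstar - xk = -e by rw [← he]; abel] at H2
  have q2a : ⟪g0, -e⟫_ℝ = -⟪g0, e⟫_ℝ := inner_neg_right g0 e
  have q2b : ‖(-e : EuclideanSpace ℝ (Fin d))‖^2 = ‖e‖^2 := by rw [norm_neg]
  have q2c : ‖0 - g0 - μ • (-e)‖^2 = μ^2*‖e‖^2 + ‖g0‖^2 - 2*μ*⟪g0, e⟫_ℝ := by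
    rw [show (0:EuclideanSpace ℝ (Fin d)) - g0 - μ • (-e) = μ • e - (1:ℝ) • g0 by module,
      expand2_aux, real_inner_comm g0 e]
    ring
  rw [q2a, q2b, q2c] at H2
  -- Q3
  have H3 := hint xstar x1
  rw [hg1, hcrit, show xstar - x1 = αk • g0 - e by rw [← hx1, ← he]; abel] at H3
  have q3a : ⟪g1, αk • g0 - e⟫_ℝ = -⟪g1, e⟫_ℝ := by
    rw [inner_sub_right, real_inner_smul_right, horth]; ring
  have q3b : ‖αk • g0 - e‖^2 = αk^2*‖g0‖^2 + ‖e‖^2 - 2*αk*⟪g0, e⟫_ℝ := by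
    rw [show αk • g0 - e = αk • g0 - (1:ℝ) • e by module, expand2_aux,
      real_inner_comm e g0]
    ring
  have q3c : ‖0 - g1 - μ • (αk • g0 - e)‖^2
      = μ^2*‖e‖^2 + μ^2*αk^2*‖g0‖^2 + ‖g1‖^2 - 2*μ^2*αk*⟪g0, e⟫_ℝ - 2*μ*⟪g1, e⟫_ℝ := by
    rw [show (0:EuclideanSpace ℝ (Fin d)) - g1 - μ • (αk • g0 - e)
        = μ • e - (μ*αk) • g0 - (1:ℝ) • g1 by module,
      expand3_aux, real_inner_comm g0 e, real_inner_comm g1 e, horth']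
    ring
  rw [q3a, q3b, q3c] at H3
  -- S1
  have hS1v : (0:ℝ) ≤ ‖(2*L*μ) • e - (αk*μ*(L+μ)+(L-μ)) • g0 - (L+μ) • g1‖^2 := sq_nonneg _
  rw [expand3_aux, real_inner_comm g0 e, real_inner_comm g1 e, horth'] at hS1v
  -- combine
  have final := master_aux μ L αk (‖e‖^2) (‖g0‖^2) (‖g1‖^2) (⟪g0, e⟫_ℝ) (⟪g1, e⟫_ℝ)
    (f xk) (f x1) (f xstar) hμ hμL (by linarith) (by linarith) (by linarith)
    (by linarith) (by positivity)
  have hρ : (L/μ - 1)/(L/μ + 1) = (L-μ)/(L+μ) := by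
    have hμ' : μ ≠ 0 := ne_of_gt hμ
    have hS' : L + μ ≠ 0 := ne_of_gt hS
    have h1 : L/μ + 1 ≠ 0 := by positivity
    field_simp
  rw [hρ]
  exact final
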